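/- Let ψ = a₀|0⟩ + a₂|2⟩ be a real unit qutrit state with a₀ ≠ 0 and a₂ ≠ 0. Then the state φ = a₀|0⟩ − a₂|2⟩ satisfies ψ†M_kψ = φ†M_kφ for all Gell-Mann matrices M_k with k ∈ {1,2,3,5,6,7}, yet |⟨ψ|φ⟩|² = (a₀² − a₂²)² < 1. Hence ψ is not uniquely determined among pure states by this measurement set. -/

import Mathlib

open Matrix Complex

/-- The Gell-Mann matrices `M₁, M₂, M₃, M₅, M₆, M₇`. -/
noncomputable def gm1 : Matrix (Fin 3) (Fin 3) ℂ := !![0, 1, 0; 1, 0, 0; 0, 0, 0]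
noncomputable def gm2 : Matrix (Fin 3) (Fin 3) ℂ := !![0, -I, 0; I, 0, 0; 0, 0, 0]
noncomputable def gm3 : Matrix (Fin 3) (Fin 3) ℂ := !![1, 0, 0; 0, -1, 0; 0, 0, 0]
noncomputable def gm5 : Matrix (Fin 3) (Fin 3) ℂ := !![0, 0, -I; 0, 0, 0; I, 0, 0]
noncomputable def gm6 : Matrix (Fin 3) (Fin 3) ℂ := !![0, 0, 0; 0, 0, 1; 0, 1, 0]
noncomputable def gm7 : Matrix (Fin 3) (Fin 3) ℂ := !![0, 0, 0; 0, 0, -I; 0, I, 0]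

/-- Expectation value `⟨ψ|M|ψ⟩` of an observable `M` in a qutrit state with real
coordinates `ψ : Fin 3 → ℝ`. -/
noncomputable def expval (M : Matrix (Fin 3) (Fin 3) ℂ) (ψ : Fin 3 → ℝ) : ℂ :=
  star (fun i => (ψ i : ℂ)) ⬝ᵥ M.mulVec (fun i => (ψ i : ℂ))

/-- The states `ψ = a₀|0⟩ + a₂|2⟩` and `φ = a₀|0⟩ − a₂|2⟩` (with `a₀, a₂ ≠ 0`) have the
same expectation values for the Gell-Mann matrices `M₁, M₂, M₃, M₅, M₆, M₇`, yet their
fidelity `(a₀² − a₂²)²` is strictly less than `1`; hence `ψ` is not UDP under this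
measurement framework. -/
theorem qutrit_not_udp_A6 (a₀ a₂ : ℝ)
    (ha : a₀ ^ 2 + a₂ ^ 2 = 1) (ha₀ : a₀ ≠ 0) (ha₂ : a₂ ≠ 0) :
    (∀ M ∈ [gm1, gm2, gm3, gm5, gm6, gm7],
      expval M ![a₀, 0, a₂] = expval M ![a₀, 0, -a₂]) ∧
    ‖(star (fun i => ((![a₀, 0, a₂] : Fin 3 → ℝ) i : ℂ)) ⬝ᵥ
        (fun i => ((![a₀, 0, -a₂] : Fin 3 → ℝ) i : ℂ)))‖ ^ 2 = (a₀ ^ 2 - a₂ ^ 2) ^ 2 ∧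
    (a₀ ^ 2 - a₂ ^ 2) ^ 2 < 1 := by
  refine ⟨?_, ?_, ?_⟩
  · intro M hM
    fin_cases hM <;>
      simp [expval, gm1, gm2, gm3, gm5, gm6, gm7, mulVec, dotProduct,
        Fin.sum_univ_three, Matrix.vecHead, Matrix.vecTail] <;> ring
  · have h1 : (star (fun i => ((![a₀, 0, a₂] : Fin 3 → ℝ) i : ℂ)) ⬝ᵥ
        (fun i => ((![a₀, 0, -a₂] : Fin 3 → ℝ) i : ℂ))) = ((a₀^2 - a₂^2 : ℝ) : ℂ) := by
      simp [dotProduct, Fin.sum_univ_three]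
      push_cast
      ring
    rw [h1, Complex.norm_real, Real.norm_eq_abs, _root_.sq_abs]
  · nlinarith [pow_pos (abs_pos.mpr ha₀) 2, pow_pos (abs_pos.mpr ha₂) 2,
      _root_.sq_abs a₀, _root_.sq_abs a₂]
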